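/- Let n, m ≥ 1 and let A, B, X, Y ∈ ℝ^{n×m}. If the n×2m matrices [A | X] and [A | Y] both have rank n, then the 2n×4m block matrix whose block columns are (0; A), (A; B), (0; X), (Y; 0) has rank 2n. -/

import Mathlib

/-- linear-algebra core of the rank computations in
Corollary 3.6 / Theorem 3.3 of the paper. If the `n × 2m` matrices `[A | X]`
and `[A | Y]` both have rank `n`, then the `2n × 4m` block matrix with block
columns `(0; A)`, `(A; B)`, `(0; X)`, `(Y; 0)` has rank `2n`. -/
theorem stmt_18 (n m : ℕ) (hn : 1 ≤ n) (hm : 1 ≤ m)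
    (A B X Y : Matrix (Fin n) (Fin m) ℝ)
    (hAX : (Matrix.fromCols A X).rank = n)
    (hAY : (Matrix.fromCols A Y).rank = n) :
    (Matrix.fromCols
        (Matrix.fromCols (Matrix.fromRows 0 A) (Matrix.fromRows A B))
        (Matrix.fromCols (Matrix.fromRows 0 X) (Matrix.fromRows Y 0))).rank
      = 2 * n := by
  have surj : ∀ (P Q : Matrix (Fin n) (Fin m) ℝ),
      (Matrix.fromCols P Q).rank = n →
      Function.Surjective (Matrix.fromCols P Q).mulVecLin := by
    intro P Q h
    rw [← LinearMap.range_eq_top]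
    apply Submodule.eq_top_of_finrank_eq
    rw [← Matrix.rank, h, Module.finrank_pi]
    simp
  have hXs := surj A X hAX
  have hYs := surj A Y hAY
  set M := (Matrix.fromCols
        (Matrix.fromCols (Matrix.fromRows 0 A) (Matrix.fromRows A B))
        (Matrix.fromCols (Matrix.fromRows 0 X) (Matrix.fromRows Y 0))) with hM
  have hr : LinearMap.range M.mulVecLin = ⊤ := by
    rw [LinearMap.range_eq_top]
    intro uv
    obtain ⟨w, hw⟩ := hYs (uv ∘ Sum.inl)
    obtain ⟨z, hz⟩ := hXs ((uv ∘ Sum.inr) - B.mulVec (w ∘ Sum.inl))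
    refine ⟨Sum.elim (Sum.elim (z ∘ Sum.inl) (w ∘ Sum.inl))
        (Sum.elim (z ∘ Sum.inr) (w ∘ Sum.inr)), ?_⟩
    have hw2 : (Matrix.fromCols A Y).mulVec w = uv ∘ Sum.inl := hw
    have hz2 : (Matrix.fromCols A X).mulVec z
        = (uv ∘ Sum.inr) - B.mulVec (w ∘ Sum.inl) := hz
    rw [← Sum.elim_comp_inl_inr w, Matrix.fromCols_mulVec_sumElim] at hw2
    rw [← Sum.elim_comp_inl_inr z, Matrix.fromCols_mulVec_sumElim] at hz2
    have hw' := hw2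
    have hz' := hz2
    funext i
    cases i with
    | inl i =>
      have := congrFun hw' i
      simp [hM, Matrix.mulVecLin_apply, Matrix.fromBlocks_mulVec, Matrix.zero_mulVec] at this ⊢
      linarith
    | inr i =>
      have := congrFun hz' i
      simp [hM, Matrix.mulVecLin_apply, Matrix.fromBlocks_mulVec, Matrix.zero_mulVec, Pi.sub_apply] at this ⊢
      linarith
  rw [show M.rank = Module.finrank ℝ (LinearMap.range M.mulVecLin) from rfl, hr,
    finrank_top, Module.finrank_pi]
  simp [two_mul]
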